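/- Let u = (u_{ij})_{i,j ∈ ℤ/Nℤ} be a matrix over A and define a := Ω^{-1} u Ω, i.e. a_{ij} = (1/N) ∑_{r,s ∈ ℤ/Nℤ} ω^{ir - sj} u_{rs}, where Ω_{ij} = (1/N) ω^{-ij} and Ω^{-1}_{ij} = ω^{ij}. Then u is a magic unitary if and only if the family (a_{ij}) satisfies the untwisted relations. -/

import Mathlib

noncomputable section

/-- `ω ^ m` for `m ∈ ℤ/Nℤ`; this is well defined (independent of the chosen
representative) as soon as `ω ^ N = 1`. -/
def wpow (N : ℕ) (ω : ℂ) (m : ZMod N) : ℂ := ω ^ m.val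

/-- `z ^ m` for `m ∈ ℤ/Nℤ`; well defined when `z ^ N = 1`. -/
def apow {A : Type*} [Monoid A] (N : ℕ) (z : A) (m : ZMod N) : A := z ^ m.val

/-- The anyonic permutation relations for a family `(q i j)` indexed by `ℤ/Nℤ × ℤ/Nℤ`. -/
def AnyonicPermRel (N : ℕ) [NeZero N] (ω : ℂ) {A : Type*} [Ring A] [StarRing A]
    [Algebra ℂ A] (q : ZMod N → ZMod N → A) : Prop :=
  (∀ i : ZMod N, q 0 i = if i = 0 then 1 else 0) ∧
  (∀ i : ZMod N, q i 0 = if i = 0 then 1 else 0) ∧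
  (∀ i j : ZMod N, star (q i j) = wpow N ω (-(i * (i - j))) • q (-i) (-j)) ∧
  (∀ i j k : ZMod N, q k (i + j) =
    ∑ l : ZMod N, wpow N ω (-(l * (i - k + l))) • (q (k - l) i * q l j)) ∧
  (∀ i j k : ZMod N, q (i + j) k =
    ∑ l : ZMod N, wpow N ω (-(i * (l - j))) • (q j l * q i (k - l)))

/-- The untwisted relations for a family `(a i j)` indexed by `ℤ/Nℤ × ℤ/Nℤ`. -/
def UntwistedRel (N : ℕ) [NeZero N] {A : Type*} [Ring A] [StarRing A]
    (a : ZMod N → ZMod N → A) : Prop :=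
  (∀ i : ZMod N, a i 0 = if i = 0 then 1 else 0) ∧
  (∀ i j : ZMod N, star (a i j) = a (-i) (-j)) ∧
  (∀ i j k : ZMod N, ∑ l : ZMod N, a (k - l) i * a l j = a k (i + j)) ∧
  (∀ i j k : ZMod N, ∑ l : ZMod N, a j l * a i (k - l) = a (i + j) k)

/-- A matrix `(m i j)` over a unital `*`-algebra is unitary. -/
def IsUnitaryMatrix (N : ℕ) [NeZero N] {A : Type*} [Ring A] [StarRing A]
    (m : ZMod N → ZMod N → A) : Prop :=
  (∀ i j : ZMod N, ∑ k : ZMod N, star (m k i) * m k j = if i = j then 1 else 0) ∧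
  (∀ i j : ZMod N, ∑ k : ZMod N, m i k * star (m j k) = if i = j then 1 else 0)

/-- The twisted conjugate matrix `ū_R` with entries `ω^{-i(j-i)} u_{ij}*`. -/
def conjR (N : ℕ) (ω : ℂ) {A : Type*} [Ring A] [StarRing A] [Algebra ℂ A]
    (u : ZMod N → ZMod N → A) : ZMod N → ZMod N → A :=
  fun i j => wpow N ω (-(i * (j - i))) • star (u i j)

/-- A magic unitary: entries are projections and all rows and columns sum to `1`. -/
def IsMagicUnitary (N : ℕ) [NeZero N] {A : Type*} [Ring A] [StarRing A]
    (u : ZMod N → ZMod N → A) : Prop :=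
  (∀ i j : ZMod N, u i j * u i j = u i j) ∧
  (∀ i j : ZMod N, star (u i j) = u i j) ∧
  (∀ j : ZMod N, ∑ i : ZMod N, u i j = 1) ∧
  (∀ i : ZMod N, ∑ j : ZMod N, u i j = 1)


set_option linter.unusedSectionVars false
set_option linter.unusedVariables false
set_option maxHeartbeats 1000000

namespace Stmt11Aux

section W
variable {N : ℕ} [NeZero N] {ω : ℂ}

lemma pow_mod (h1 : ω ^ N = 1) (a : ℕ) : ω ^ (a % N) = ω ^ a := by
  conv_rhs => rw [← Nat.div_add_mod a N, pow_add, pow_mul, h1, one_pow, one_mul]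

lemma wpow_natCast (h1 : ω ^ N = 1) (a : ℕ) : wpow N ω (a : ZMod N) = ω ^ a := by
  rw [wpow, ZMod.val_natCast, pow_mod h1]

lemma wpow_add (h1 : ω ^ N = 1) (m n : ZMod N) :
    wpow N ω (m + n) = wpow N ω m * wpow N ω n := by
  have h : m + n = ((m.val + n.val : ℕ) : ZMod N) := by
    push_cast [ZMod.natCast_val, ZMod.cast_id]; ring
  rw [h, wpow_natCast h1, pow_add]; rfl

lemma wpow_zero : wpow N ω (0 : ZMod N) = 1 := by simp [wpow]

lemma zmod_sum_range (f : ℕ → ℂ) : ∑ i : ZMod N, f i.val = ∑ t ∈ Finset.range N, f t := by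
  refine Finset.sum_nbij' (fun a => a.val) (fun t => (t : ZMod N)) ?_ ?_ ?_ ?_ ?_
  · intro a _; simp [ZMod.val_lt]
  · intro a _; simp
  · intro a _; exact ZMod.natCast_rightInverse a
  · intro a ha; simp at ha; exact ZMod.val_cast_of_lt ha
  · intro a _; rfl

lemma sum_wpow (hω : IsPrimitiveRoot ω N) (m : ZMod N) :
    ∑ i : ZMod N, wpow N ω (i * m) = if m = 0 then (N : ℂ) else 0 := by
  have h1 : ω ^ N = 1 := hω.pow_eq_one
  have key : ∀ i : ZMod N, wpow N ω (i * m) = (ω ^ m.val) ^ i.val := by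
    intro i
    have h : i * m = ((i.val * m.val : ℕ) : ZMod N) := by
      push_cast [ZMod.natCast_val, ZMod.cast_id]; ring
    rw [h, wpow_natCast h1, mul_comm, pow_mul]
  simp_rw [key]
  rw [zmod_sum_range (fun t => (ω ^ m.val) ^ t)]
  by_cases hm : m = 0
  · simp [hm]
  · rw [if_neg hm]
    have hz : ω ^ m.val ≠ 1 := by
      intro h
      have hdvd := (hω.pow_eq_one_iff_dvd m.val).mp h
      have hlt := ZMod.val_lt m
      exact hm ((ZMod.val_eq_zero m).mp (Nat.eq_zero_of_dvd_of_lt hdvd hlt))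
    rw [geom_sum_eq hz]
    have h2 : (ω ^ m.val) ^ N = 1 := by rw [← pow_mul, mul_comm, pow_mul, h1, one_pow]
    simp [h2]

lemma wpow_star (hω : IsPrimitiveRoot ω N) (m : ZMod N) :
    (starRingEnd ℂ) (wpow N ω m) = wpow N ω (-m) := by
  have h1 : ω ^ N = 1 := hω.pow_eq_one
  have habs : ‖wpow N ω m‖ = 1 := by
    refine Complex.norm_eq_one_of_pow_eq_one (n := N) ?_ (NeZero.ne N)
    rw [wpow, ← pow_mul, mul_comm, pow_mul, h1, one_pow]
  rw [← Complex.inv_eq_conj habs]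
  exact inv_eq_of_mul_eq_one_right (by rw [← wpow_add h1, add_neg_cancel, wpow_zero])

variable {A : Type*} [AddCommGroup A] [Module ℂ A]

lemma finv (hω : IsPrimitiveRoot ω N) {f : ZMod N → A}
    (h : ∀ t : ZMod N, ∑ r : ZMod N, wpow N ω (t * r) • f r = 0) (r₀ : ZMod N) :
    f r₀ = 0 := by
  have h1 := hω.pow_eq_one
  have key : ∑ t : ZMod N, wpow N ω (t * (-r₀)) • (∑ r : ZMod N, wpow N ω (t * r) • f r)
      = (N : ℂ) • f r₀ := by
    simp_rw [Finset.smul_sum, smul_smul, ← wpow_add h1]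
    rw [Finset.sum_comm]
    have e1 : ∀ r t : ZMod N, t * (-r₀) + t * r = t * (r - r₀) := by intros; ring
    calc ∑ r : ZMod N, ∑ t : ZMod N, wpow N ω (t * (-r₀) + t * r) • f r
        = ∑ r : ZMod N, (∑ t : ZMod N, wpow N ω (t * (r - r₀))) • f r := by
          simp_rw [e1, Finset.sum_smul]
      _ = ∑ r : ZMod N, (if r = r₀ then (N : ℂ) else 0) • f r := by
          simp_rw [sum_wpow hω, sub_eq_zero]
      _ = (N : ℂ) • f r₀ := by simp [ite_smul]
  rw [Finset.sum_congr rfl (fun t _ => by rw [h t, smul_zero]), Finset.sum_const,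
    smul_zero] at key
  have hN : (N : ℂ) ≠ 0 := Nat.cast_ne_zero.mpr (NeZero.ne N)
  simpa [hN] using key.symm

lemma finv2 (hω : IsPrimitiveRoot ω N) {f : ZMod N → ZMod N → A}
    (h : ∀ t₁ t₂ : ZMod N, ∑ r : ZMod N, ∑ s : ZMod N,
      wpow N ω (t₁ * r + t₂ * s) • f r s = 0) (r s : ZMod N) : f r s = 0 := by
  have h1 := hω.pow_eq_one
  have step : ∀ t₂ r, ∑ s : ZMod N, wpow N ω (t₂ * s) • f r s = 0 := by
    intro t₂ r
    refine finv hω (f := fun r => ∑ s : ZMod N, wpow N ω (t₂ * s) • f r s) ?_ r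
    intro t₁
    simpa [Finset.smul_sum, smul_smul, ← wpow_add h1] using h t₁ t₂
  exact finv hω (step · r) s

lemma finv3 (hω : IsPrimitiveRoot ω N) {f : ZMod N → ZMod N → ZMod N → A}
    (h : ∀ t₁ t₂ t₃ : ZMod N, ∑ r : ZMod N, ∑ s : ZMod N, ∑ v : ZMod N,
      wpow N ω (t₁ * r + t₂ * s + t₃ * v) • f r s v = 0) (r s v : ZMod N) :
    f r s v = 0 := by
  have h1 := hω.pow_eq_one
  have step : ∀ t₂ t₃ r, ∑ s : ZMod N, ∑ v : ZMod N,
      wpow N ω (t₂ * s + t₃ * v) • f r s v = 0 := by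
    intro t₂ t₃ r
    refine finv hω
      (f := fun r => ∑ s : ZMod N, ∑ v : ZMod N, wpow N ω (t₂ * s + t₃ * v) • f r s v) ?_ r
    intro t₁
    simpa [Finset.smul_sum, smul_smul, ← wpow_add h1, add_assoc] using h t₁ t₂ t₃
  exact finv2 hω (fun t₂ t₃ => step t₂ t₃ r) s v

lemma scomm {M : Type*} [AddCommMonoid M] (f : ZMod N → ZMod N → M) :
    ∑ a : ZMod N, ∑ b : ZMod N, f a b = ∑ b : ZMod N, ∑ a : ZMod N, f a b :=
  Finset.sum_comm

lemma rot5 {M : Type*} [AddCommMonoid M] (f : ZMod N → ZMod N → ZMod N → ZMod N → ZMod N → M) :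
    ∑ a : ZMod N, ∑ b : ZMod N, ∑ c : ZMod N, ∑ d : ZMod N, ∑ e : ZMod N, f a b c d e
      = ∑ b : ZMod N, ∑ c : ZMod N, ∑ d : ZMod N, ∑ e : ZMod N, ∑ a : ZMod N, f a b c d e := by
  rw [scomm]
  refine Finset.sum_congr rfl fun b _ => ?_
  rw [scomm]
  refine Finset.sum_congr rfl fun c _ => ?_
  rw [scomm]
  refine Finset.sum_congr rfl fun d _ => ?_
  rw [scomm]

lemma rot3 {M : Type*} [AddCommMonoid M] (f : ZMod N → ZMod N → ZMod N → M) :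
    ∑ a : ZMod N, ∑ b : ZMod N, ∑ c : ZMod N, f a b c
      = ∑ b : ZMod N, ∑ c : ZMod N, ∑ a : ZMod N, f a b c := by
  rw [scomm]
  exact Finset.sum_congr rfl fun b _ => scomm _

end W

section E
variable {N : ℕ} [NeZero N] {ω : ℂ}
variable {A : Type*} [NormedRing A] [StarRing A] [CStarRing A]
  [NormedAlgebra ℂ A] [CompleteSpace A] [StarModule ℂ A]

lemma E3 (hω : IsPrimitiveRoot ω N) (u a : ZMod N → ZMod N → A)
    (ha : ∀ i j : ZMod N,
      a i j = (N : ℂ)⁻¹ • ∑ r : ZMod N, ∑ s : ZMod N, wpow N ω (i * r - s * j) • u r s)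
    (i j k : ZMod N) :
    ∑ l : ZMod N, a (k - l) i * a l j
      = (N : ℂ)⁻¹ • ∑ r : ZMod N, ∑ s : ZMod N, ∑ s' : ZMod N,
          wpow N ω (k * r - s * i - s' * j) • (u r s * u r s') := by
  have h1 := hω.pow_eq_one
  have hN : (N : ℂ) ≠ 0 := Nat.cast_ne_zero.mpr (NeZero.ne N)
  simp only [ha, smul_mul_smul_comm, Finset.sum_mul, Finset.mul_sum, Finset.smul_sum,
    smul_mul_smul_comm, smul_smul]
  have e2 : ∀ l r' s' r s : ZMod N,
      ((N : ℂ)⁻¹ * wpow N ω ((k - l) * r - s * i) * ((N : ℂ)⁻¹ * wpow N ω (l * r' - s' * j)))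
          • (u r s * u r' s')
        = wpow N ω (l * (r' - r)) •
            ((((N : ℂ)⁻¹ * (N : ℂ)⁻¹) * wpow N ω (k * r - s * i - s' * j)) •
              (u r s * u r' s')) := by
    intro l r' s' r s
    rw [smul_smul]
    congr 1
    have e3 : wpow N ω ((k - l) * r - s * i) * wpow N ω (l * r' - s' * j)
        = wpow N ω (l * (r' - r)) * wpow N ω (k * r - s * i - s' * j) := by
      rw [← wpow_add h1, ← wpow_add h1]; congr 1; ring
    linear_combination ((N : ℂ)⁻¹ * (N : ℂ)⁻¹) * e3
  simp only [e2]
  rw [rot5]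
  simp only [← Finset.sum_smul, sum_wpow hω, sub_eq_zero, ite_smul, zero_smul]
  rw [Finset.sum_congr rfl fun x (_ : x ∈ Finset.univ) =>
    Finset.sum_congr rfl fun x1 (_ : x1 ∈ Finset.univ) => scomm _]
  simp only [Finset.sum_ite_eq, Finset.mem_univ, if_true]
  have e4 : ∀ r s s' : ZMod N,
      (N : ℂ) • (((N : ℂ)⁻¹ * (N : ℂ)⁻¹ * wpow N ω (k * r - s * i - s' * j)) •
        (u r s * u r s'))
      = ((N : ℂ)⁻¹ * wpow N ω (k * r - s * i - s' * j)) • (u r s * u r s') := by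
    intro r s s'
    rw [smul_smul]; congr 1; field_simp
  simp only [e4]
  exact Finset.sum_congr rfl fun r _ => scomm _

lemma E4 (hω : IsPrimitiveRoot ω N) (u a : ZMod N → ZMod N → A)
    (ha : ∀ i j : ZMod N,
      a i j = (N : ℂ)⁻¹ • ∑ r : ZMod N, ∑ s : ZMod N, wpow N ω (i * r - s * j) • u r s)
    (i j k : ZMod N) :
    ∑ l : ZMod N, a j l * a i (k - l)
      = (N : ℂ)⁻¹ • ∑ r : ZMod N, ∑ r' : ZMod N, ∑ s : ZMod N,
          wpow N ω (j * r + i * r' - s * k) • (u r s * u r' s) := by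
  have h1 := hω.pow_eq_one
  have hN : (N : ℂ) ≠ 0 := Nat.cast_ne_zero.mpr (NeZero.ne N)
  simp only [ha, smul_mul_smul_comm, Finset.sum_mul, Finset.mul_sum, Finset.smul_sum,
    smul_mul_smul_comm, smul_smul]
  have e2 : ∀ l r' s' r s : ZMod N,
      ((N : ℂ)⁻¹ * wpow N ω (j * r - s * l) * ((N : ℂ)⁻¹ * wpow N ω (i * r' - s' * (k - l))))
          • (u r s * u r' s')
        = wpow N ω (l * (s' - s)) •
            ((((N : ℂ)⁻¹ * (N : ℂ)⁻¹) * wpow N ω (j * r + i * r' - s' * k)) •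
              (u r s * u r' s')) := by
    intro l r' s' r s
    rw [smul_smul]
    congr 1
    have e3 : wpow N ω (j * r - s * l) * wpow N ω (i * r' - s' * (k - l))
        = wpow N ω (l * (s' - s)) * wpow N ω (j * r + i * r' - s' * k) := by
      rw [← wpow_add h1, ← wpow_add h1]; congr 1; ring
    linear_combination ((N : ℂ)⁻¹ * (N : ℂ)⁻¹) * e3
  simp only [e2]
  rw [rot5]
  simp only [← Finset.sum_smul, sum_wpow hω, sub_eq_zero, ite_smul, zero_smul]
  simp only [Finset.sum_ite_eq, Finset.mem_univ, if_true]
  have e4 : ∀ r r' s : ZMod N,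
      (N : ℂ) • (((N : ℂ)⁻¹ * (N : ℂ)⁻¹ * wpow N ω (j * r + i * r' - s * k)) •
        (u r s * u r' s))
      = ((N : ℂ)⁻¹ * wpow N ω (j * r + i * r' - s * k)) • (u r s * u r' s) := by
    intro r r' s
    rw [smul_smul]; congr 1; field_simp
  simp only [e4]
  rw [rot3 (f := fun r r' s => ((N : ℂ)⁻¹ * wpow N ω (j * r + i * r' - s * k)) •
        (u r s * u r' s))]

lemma E5 (hω : IsPrimitiveRoot ω N) (u a : ZMod N → ZMod N → A)
    (ha : ∀ i j : ZMod N,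
      a i j = (N : ℂ)⁻¹ • ∑ r : ZMod N, ∑ s : ZMod N, wpow N ω (i * r - s * j) • u r s)
    (i j k : ZMod N) :
    a k (i + j)
      = (N : ℂ)⁻¹ • ∑ r : ZMod N, ∑ s : ZMod N, ∑ s' : ZMod N,
          wpow N ω (k * r - s * i - s' * j) • (if s = s' then u r s else 0) := by
  simp only [smul_ite, smul_zero, Finset.sum_ite_eq, Finset.mem_univ, if_true]
  rw [ha]
  congr 1
  refine Finset.sum_congr rfl fun r _ => Finset.sum_congr rfl fun s _ => ?_
  congr 1
  ring

lemma E6 (hω : IsPrimitiveRoot ω N) (u a : ZMod N → ZMod N → A)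
    (ha : ∀ i j : ZMod N,
      a i j = (N : ℂ)⁻¹ • ∑ r : ZMod N, ∑ s : ZMod N, wpow N ω (i * r - s * j) • u r s)
    (i j k : ZMod N) :
    a (i + j) k
      = (N : ℂ)⁻¹ • ∑ r : ZMod N, ∑ r' : ZMod N, ∑ s : ZMod N,
          wpow N ω (j * r + i * r' - s * k) • (if r = r' then u r s else 0) := by
  rw [Finset.sum_congr rfl fun r (_ : r ∈ Finset.univ) => scomm
    (fun r' s => wpow N ω (j * r + i * r' - s * k) • (if r = r' then u r s else 0))]
  simp only [smul_ite, smul_zero, Finset.sum_ite_eq, Finset.mem_univ, if_true]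
  rw [ha]
  congr 1
  refine Finset.sum_congr rfl fun r _ => Finset.sum_congr rfl fun s _ => ?_
  congr 1
  ring

lemma E1 (hω : IsPrimitiveRoot ω N) (u a : ZMod N → ZMod N → A)
    (ha : ∀ i j : ZMod N,
      a i j = (N : ℂ)⁻¹ • ∑ r : ZMod N, ∑ s : ZMod N, wpow N ω (i * r - s * j) • u r s)
    (i j : ZMod N) :
    star (a i j)
      = (N : ℂ)⁻¹ • ∑ r : ZMod N, ∑ s : ZMod N,
          wpow N ω (s * j - i * r) • star (u r s) := by
  rw [ha]
  rw [star_smul, star_sum]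
  simp only [star_sum, star_smul, Complex.star_def, wpow_star hω, neg_sub]
  congr 1
  simp [map_inv₀]

lemma E1' (hω : IsPrimitiveRoot ω N) (u a : ZMod N → ZMod N → A)
    (ha : ∀ i j : ZMod N,
      a i j = (N : ℂ)⁻¹ • ∑ r : ZMod N, ∑ s : ZMod N, wpow N ω (i * r - s * j) • u r s)
    (i j : ZMod N) :
    a (-i) (-j)
      = (N : ℂ)⁻¹ • ∑ r : ZMod N, ∑ s : ZMod N,
          wpow N ω (s * j - i * r) • u r s := by
  rw [ha]
  congr 1
  refine Finset.sum_congr rfl fun r _ => Finset.sum_congr rfl fun s _ => ?_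
  congr 1
  ring

lemma E2 (hω : IsPrimitiveRoot ω N) (u a : ZMod N → ZMod N → A)
    (ha : ∀ i j : ZMod N,
      a i j = (N : ℂ)⁻¹ • ∑ r : ZMod N, ∑ s : ZMod N, wpow N ω (i * r - s * j) • u r s)
    (i : ZMod N) :
    a i 0 = (N : ℂ)⁻¹ • ∑ r : ZMod N, wpow N ω (i * r) • (∑ s : ZMod N, u r s) := by
  rw [ha]
  congr 1
  refine Finset.sum_congr rfl fun r _ => ?_
  rw [Finset.smul_sum]
  refine Finset.sum_congr rfl fun s _ => ?_
  congr 1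
  ring

lemma E2' (hω : IsPrimitiveRoot ω N) (i : ZMod N) :
    (N : ℂ)⁻¹ • ∑ r : ZMod N, wpow N ω (i * r) • (1 : A)
      = if i = 0 then 1 else 0 := by
  have hN : (N : ℂ) ≠ 0 := Nat.cast_ne_zero.mpr (NeZero.ne N)
  have h : ∀ r : ZMod N, i * r = r * i := fun r => mul_comm i r
  simp_rw [h]
  rw [← Finset.sum_smul, sum_wpow hω]
  split
  · rw [smul_smul]; simp [hN]
  · simp

lemma proj_orth (p : ZMod N → A) (hidem : ∀ s, p s * p s = p s)
    (hsa : ∀ s, star (p s) = p s) (hsum : ∑ s : ZMod N, p s = 1) :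
    ∀ s t, s ≠ t → p s * p t = 0 := by
  letI : CStarAlgebra A := ⟨⟩
  letI := CStarAlgebra.spectralOrder A
  haveI := CStarAlgebra.spectralOrderedRing A
  intro s t hst
  have hnn : ∀ v, (0 : A) ≤ p v := fun v => by
    have h := star_mul_self_nonneg (p v)
    rwa [hsa, hidem] at h
  have hle : p s ≤ 1 - p t := by
    have h1 : ∑ v ∈ Finset.univ.erase t, p v = 1 - p t := by
      rw [Finset.sum_erase_eq_sub (Finset.mem_univ t), hsum]
    rw [← h1]
    exact Finset.single_le_sum (fun v _ => hnn v) (Finset.mem_erase.mpr ⟨hst, Finset.mem_univ s⟩)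
  have key : star (p s * p t) * (p s * p t) = p t * p s * p t := by
    rw [star_mul, hsa, hsa]
    calc p t * p s * (p s * p t) = p t * (p s * p s) * p t := by noncomm_ring
      _ = p t * p s * p t := by rw [hidem]
  have h3 : p t * (1 - p t) * p t = 0 := by
    have h : p t * (1 - p t) = 0 := by rw [mul_sub, mul_one, hidem, sub_self]
    rw [h, zero_mul]
  have h2 : p t * p s * p t ≤ 0 := by
    have h := star_left_conjugate_le_conjugate hle (p t)
    rw [hsa] at h
    rwa [h3] at h
  have h4 : star (p s * p t) * (p s * p t) = 0 :=
    le_antisymm (key ▸ h2) (star_mul_self_nonneg _)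
  have h5 := CStarRing.norm_star_mul_self (x := p s * p t)
  rw [h4, norm_zero] at h5
  exact norm_eq_zero.mp (by nlinarith [norm_nonneg (p s * p t)])

lemma proj_sum_card (p : ZMod N → A) (hidem : ∀ s, p s * p s = p s)
    (hsa : ∀ s, star (p s) = p s)
    (hsum : ∑ s : ZMod N, p s = ∑ _s : ZMod N, (1 : A)) :
    ∀ s, p s = 1 := by
  letI : CStarAlgebra A := ⟨⟩
  letI := CStarAlgebra.spectralOrder A
  haveI := CStarAlgebra.spectralOrderedRing A
  intro s
  have hnn : ∀ v, (0 : A) ≤ 1 - p v := fun v => by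
    have h := star_mul_self_nonneg (1 - p v)
    have hq : star (1 - p v) = 1 - p v := by rw [star_sub, star_one, hsa]
    have hi : (1 - p v) * (1 - p v) = 1 - p v := by
      rw [sub_mul, mul_sub, mul_sub, one_mul, mul_one, hidem]; abel_nf; rw [one_mul]
    rwa [hq, hi] at h
  have hz : ∑ v : ZMod N, (1 - p v) = 0 := by
    rw [Finset.sum_sub_distrib, hsum, sub_self]
  have h := (Finset.sum_eq_zero_iff_of_nonneg (fun v _ => hnn v)).mp hz s (Finset.mem_univ s)
  exact (sub_eq_zero.mp h).symm

end E
end Stmt11Aux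

open Stmt11Aux

theorem stmt_11 (N : ℕ) [NeZero N] (hN : 2 ≤ N) (ω : ℂ) (hω : IsPrimitiveRoot ω N)
    {A : Type*} [NormedRing A] [StarRing A] [CStarRing A]
    [NormedAlgebra ℂ A] [CompleteSpace A] [StarModule ℂ A]
    (u a : ZMod N → ZMod N → A)
    (ha : ∀ i j : ZMod N,
      a i j = (N : ℂ)⁻¹ • ∑ r : ZMod N, ∑ s : ZMod N, wpow N ω (i * r - s * j) • u r s) :
    IsMagicUnitary N u ↔ UntwistedRel N a := by
  have h1 : ω ^ N = 1 := hω.pow_eq_one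
  have hNz : (N : ℂ) ≠ 0 := Nat.cast_ne_zero.mpr (NeZero.ne N)
  have cancel : ∀ {x y : A}, (N : ℂ)⁻¹ • x = (N : ℂ)⁻¹ • y → x = y := by
    intro x y h
    have h' := congrArg (fun z => (N : ℂ) • z) h
    simpa [smul_smul, mul_inv_cancel₀ hNz] using h'
  constructor
  · rintro ⟨hid, hst, hcol, hrow⟩
    have rowOrth : ∀ r s s' : ZMod N, u r s * u r s' = if s = s' then u r s else 0 := by
      intro r s s'
      by_cases h : s = s'
      · subst h; rw [if_pos rfl, hid]
      · rw [if_neg h]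
        exact proj_orth (fun t => u r t) (fun t => hid r t) (fun t => hst r t) (hrow r) s s' h
    have colOrth : ∀ s r r' : ZMod N, u r s * u r' s = if r = r' then u r s else 0 := by
      intro s r r'
      by_cases h : r = r'
      · subst h; rw [if_pos rfl, hid]
      · rw [if_neg h]
        exact proj_orth (fun t => u t s) (fun t => hid t s) (fun t => hst t s) (hcol s) r r' h
    refine ⟨?_, ?_, ?_, ?_⟩
    · intro i
      rw [E2 hω u a ha i]
      simp_rw [hrow]
      exact E2' hω i
    · intro i j
      rw [E1 hω u a ha i j, E1' hω u a ha i j]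
      simp_rw [hst]
    · intro i j k
      rw [E3 hω u a ha i j k, E5 hω u a ha i j k]
      simp_rw [rowOrth]
    · intro i j k
      rw [E4 hω u a ha i j k, E6 hω u a ha i j k]
      simp_rw [colOrth]
  · rintro ⟨ha0, hastar, hc, hd⟩
    have hrow : ∀ r : ZMod N, ∑ s : ZMod N, u r s = 1 := by
      have H : ∀ t : ZMod N,
          ∑ r : ZMod N, wpow N ω (t * r) • ((∑ s : ZMod N, u r s) - 1) = 0 := by
        intro t
        have h5 : (N : ℂ)⁻¹ • ∑ r : ZMod N, wpow N ω (t * r) • (∑ s : ZMod N, u r s)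
            = (N : ℂ)⁻¹ • ∑ r : ZMod N, wpow N ω (t * r) • (1 : A) :=
          (E2 hω u a ha t).symm.trans ((ha0 t).trans (E2' hω t).symm)
        have h6 := cancel h5
        simp [smul_sub, Finset.sum_sub_distrib, h6]
      intro r
      exact sub_eq_zero.mp
        (finv hω (f := fun r => (∑ s : ZMod N, u r s) - 1) H r)
    have hst : ∀ r s : ZMod N, star (u r s) = u r s := by
      have H : ∀ t₁ t₂ : ZMod N, ∑ r : ZMod N, ∑ s : ZMod N,
          wpow N ω (t₁ * r + t₂ * s) • (star (u r s) - u r s) = 0 := by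
        intro t₁ t₂
        have h5 : (N : ℂ)⁻¹ • (∑ r : ZMod N, ∑ s : ZMod N,
              wpow N ω (s * t₂ - (-t₁) * r) • star (u r s))
            = (N : ℂ)⁻¹ • (∑ r : ZMod N, ∑ s : ZMod N,
              wpow N ω (s * t₂ - (-t₁) * r) • u r s) := by
          rw [← E1 hω u a ha (-t₁) t₂, ← E1' hω u a ha (-t₁) t₂]
          exact hastar (-t₁) t₂
        have h6 := cancel h5
        calc ∑ r : ZMod N, ∑ s : ZMod N, wpow N ω (t₁ * r + t₂ * s) • (star (u r s) - u r s)
            = ∑ r : ZMod N, ∑ s : ZMod N,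
                (wpow N ω (s * t₂ - (-t₁) * r) • star (u r s)
                  - wpow N ω (s * t₂ - (-t₁) * r) • u r s) := by
              refine Finset.sum_congr rfl fun r _ => Finset.sum_congr rfl fun s _ => ?_
              rw [smul_sub]
              congr 2 <;> · congr 1; ring
          _ = 0 := by
              rw [Finset.sum_congr rfl fun r (_ : r ∈ Finset.univ) => Finset.sum_sub_distrib _ _,
                Finset.sum_sub_distrib, h6, sub_self]
      intro r s
      exact sub_eq_zero.mp
        (finv2 hω (f := fun r s => star (u r s) - u r s) H r s)
    have rowOrth : ∀ r s s' : ZMod N,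
        u r s * u r s' = if s = s' then u r s else 0 := by
      have H : ∀ t₁ t₂ t₃ : ZMod N, ∑ r : ZMod N, ∑ s : ZMod N, ∑ s' : ZMod N,
          wpow N ω (t₁ * r + t₂ * s + t₃ * s') •
            (u r s * u r s' - (if s = s' then u r s else 0)) = 0 := by
        intro t₁ t₂ t₃
        have h5 : (N : ℂ)⁻¹ • (∑ r : ZMod N, ∑ s : ZMod N, ∑ s' : ZMod N,
              wpow N ω (t₁ * r - s * (-t₂) - s' * (-t₃)) • (u r s * u r s'))
            = (N : ℂ)⁻¹ • (∑ r : ZMod N, ∑ s : ZMod N, ∑ s' : ZMod N,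
              wpow N ω (t₁ * r - s * (-t₂) - s' * (-t₃)) •
                (if s = s' then u r s else 0)) := by
          rw [← E3 hω u a ha (-t₂) (-t₃) t₁, ← E5 hω u a ha (-t₂) (-t₃) t₁]
          exact hc (-t₂) (-t₃) t₁
        have h6 := cancel h5
        calc ∑ r : ZMod N, ∑ s : ZMod N, ∑ s' : ZMod N,
              wpow N ω (t₁ * r + t₂ * s + t₃ * s') •
                (u r s * u r s' - (if s = s' then u r s else 0))
            = ∑ r : ZMod N, ∑ s : ZMod N, ∑ s' : ZMod N,
                (wpow N ω (t₁ * r - s * (-t₂) - s' * (-t₃)) • (u r s * u r s')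
                  - wpow N ω (t₁ * r - s * (-t₂) - s' * (-t₃)) •
                      (if s = s' then u r s else 0)) := by
              refine Finset.sum_congr rfl fun r _ => Finset.sum_congr rfl fun s _ =>
                Finset.sum_congr rfl fun s' _ => ?_
              rw [smul_sub]
              congr 2 <;> · congr 1; ring
          _ = 0 := by
              rw [Finset.sum_congr rfl fun r (_ : r ∈ Finset.univ) =>
                  Finset.sum_congr rfl fun s (_ : s ∈ Finset.univ) => Finset.sum_sub_distrib _ _,
                Finset.sum_congr rfl fun r (_ : r ∈ Finset.univ) => Finset.sum_sub_distrib _ _,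
                Finset.sum_sub_distrib, h6, sub_self]
      intro r s s'
      exact sub_eq_zero.mp
        (finv3 hω (f := fun r s s' => u r s * u r s' - (if s = s' then u r s else 0)) H r s s')
    have colOrth : ∀ r r' s : ZMod N,
        u r s * u r' s = if r = r' then u r s else 0 := by
      have H : ∀ t₁ t₂ t₃ : ZMod N, ∑ r : ZMod N, ∑ r' : ZMod N, ∑ s : ZMod N,
          wpow N ω (t₁ * r + t₂ * r' + t₃ * s) •
            (u r s * u r' s - (if r = r' then u r s else 0)) = 0 := by
        intro t₁ t₂ t₃
        have h5 : (N : ℂ)⁻¹ • (∑ r : ZMod N, ∑ r' : ZMod N, ∑ s : ZMod N,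
              wpow N ω (t₁ * r + t₂ * r' - s * (-t₃)) • (u r s * u r' s))
            = (N : ℂ)⁻¹ • (∑ r : ZMod N, ∑ r' : ZMod N, ∑ s : ZMod N,
              wpow N ω (t₁ * r + t₂ * r' - s * (-t₃)) •
                (if r = r' then u r s else 0)) := by
          rw [← E4 hω u a ha t₂ t₁ (-t₃), ← E6 hω u a ha t₂ t₁ (-t₃)]
          exact hd t₂ t₁ (-t₃)
        have h6 := cancel h5
        calc ∑ r : ZMod N, ∑ r' : ZMod N, ∑ s : ZMod N,
              wpow N ω (t₁ * r + t₂ * r' + t₃ * s) •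
                (u r s * u r' s - (if r = r' then u r s else 0))
            = ∑ r : ZMod N, ∑ r' : ZMod N, ∑ s : ZMod N,
                (wpow N ω (t₁ * r + t₂ * r' - s * (-t₃)) • (u r s * u r' s)
                  - wpow N ω (t₁ * r + t₂ * r' - s * (-t₃)) •
                      (if r = r' then u r s else 0)) := by
              refine Finset.sum_congr rfl fun r _ => Finset.sum_congr rfl fun r' _ =>
                Finset.sum_congr rfl fun s _ => ?_
              rw [smul_sub]
              congr 2 <;> · congr 1; ring
          _ = 0 := by
              rw [Finset.sum_congr rfl fun r (_ : r ∈ Finset.univ) =>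
                  Finset.sum_congr rfl fun s (_ : s ∈ Finset.univ) => Finset.sum_sub_distrib _ _,
                Finset.sum_congr rfl fun r (_ : r ∈ Finset.univ) => Finset.sum_sub_distrib _ _,
                Finset.sum_sub_distrib, h6, sub_self]
      intro r r' s
      exact sub_eq_zero.mp
        (finv3 hω (f := fun r r' s => u r s * u r' s - (if r = r' then u r s else 0)) H r r' s)
    refine ⟨?_, hst, ?_, hrow⟩
    · intro i j
      have h := rowOrth i j j
      rwa [if_pos rfl] at h
    · intro s
      refine proj_sum_card (fun t => ∑ r : ZMod N, u r t) ?_ ?_ ?_ s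
      · intro t
        rw [Finset.sum_mul_sum]
        calc ∑ r : ZMod N, ∑ r' : ZMod N, u r t * u r' t
            = ∑ r : ZMod N, ∑ r' : ZMod N, (if r = r' then u r t else 0) := by
              refine Finset.sum_congr rfl fun r _ => Finset.sum_congr rfl fun r' _ => ?_
              exact colOrth r r' t
          _ = ∑ r : ZMod N, u r t := by
              refine Finset.sum_congr rfl fun r _ => ?_
              simp
      · intro t
        rw [star_sum]
        exact Finset.sum_congr rfl fun r _ => hst r t
      · rw [Finset.sum_comm]
        exact Finset.sum_congr rfl fun r _ => hrow r
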